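/- For nonnegative integers x_1,...,x_k (not all reduced to trivial cases; the inequality holds as stated for all nonnegative integers) and any integer j ≥ 1, the complete homogeneous symmetric polynomials satisfy the log-concavity inequality (W_j^{(k)}(x_1,...,x_k))^2 ≥ W_{j-1}^{(k)}(x_1,...,x_k) · W_{j+1}^{(k)}(x_1,...,x_k). -/

import Mathlib

/-- The Wronski (complete homogeneous symmetric) function
`W k δ x = ∑_{i₁+⋯+i_k = δ} x₁^{i₁} ⋯ x_k^{i_k}`. -/
def W {R : Type*} [CommSemiring R] (k δ : ℕ) (x : Fin k → R) : R :=
  ∑ c ∈ Finset.filter (fun c => ∑ i, c i = δ)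
      (Fintype.piFinset fun _ : Fin k => Finset.range (δ + 1)),
    ∏ i, x i ^ c i

lemma W_nonneg {k δ : ℕ} {x : Fin k → ℤ} (hx : ∀ i, 0 ≤ x i) : 0 ≤ W k δ x := by
  refine Finset.sum_nonneg fun c _ => Finset.prod_nonneg fun i _ => pow_nonneg (hx i) _

lemma W_eq_tuple {k δ : ℕ} (x : Fin k → ℤ) :
    W k δ x = ∑ c ∈ Finset.Nat.antidiagonalTuple k δ, ∏ i, x i ^ c i := by
  unfold W
  refine Finset.sum_congr ?_ fun _ _ => rfl
  ext c
  simp only [Finset.mem_filter, Fintype.mem_piFinset, Finset.mem_range,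
    Finset.Nat.mem_antidiagonalTuple, Nat.lt_succ_iff]
  constructor
  · exact fun h => h.2
  · intro h
    refine ⟨fun i => ?_, h⟩
    calc c i ≤ ∑ j, c j := Finset.single_le_sum (fun j _ => Nat.zero_le _) (Finset.mem_univ i)
      _ = δ := h

lemma W_closed (k n : ℕ) (x : Fin (k + 1) → ℤ) :
    W (k + 1) n x
      = ∑ i ∈ Finset.range (n + 1), x 0 ^ i * W k (n - i) (x ∘ Fin.succ) := by
  have h1 : W (k + 1) n x
      = ∑ mr ∈ Finset.HasAntidiagonal.antidiagonal n, ∑ c ∈ Finset.Nat.antidiagonalTuple k mr.2,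
          x 0 ^ mr.1 * ∏ i, (x ∘ Fin.succ) i ^ c i := by
    rw [W_eq_tuple, Finset.sum_sigma']
    refine (Finset.sum_nbij' (fun p => Fin.cons p.1.1 p.2)
      (fun c => ⟨(c 0, ∑ i, c (Fin.succ i)), fun i => c (Fin.succ i)⟩)
      ?_ ?_ ?_ ?_ ?_).symm
    · rintro ⟨⟨m, r⟩, c⟩ hp
      simp only [Finset.mem_sigma, Finset.Nat.mem_antidiagonalTuple,
        Finset.HasAntidiagonal.mem_antidiagonal] at hp ⊢
      rw [Fin.sum_cons]
      omega
    · intro c hc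
      simp only [Finset.Nat.mem_antidiagonalTuple, Finset.mem_sigma,
        Finset.HasAntidiagonal.mem_antidiagonal] at hc ⊢
      exact ⟨by rw [← hc, Fin.sum_univ_succ], trivial⟩
    · rintro ⟨⟨m, r⟩, c⟩ hp
      simp only [Finset.mem_sigma, Finset.Nat.mem_antidiagonalTuple,
        Finset.mem_antidiagonal] at hp
      refine Sigma.ext ?_ (heq_of_eq ?_)
      · simp only [Fin.cons_zero, Fin.cons_succ]
        rw [hp.2]
      · funext i
        simp [Fin.cons_succ]
    · intro c hc
      exact Fin.cons_self_tail c
    · rintro ⟨⟨m, r⟩, c⟩ hp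
      rw [Fin.prod_univ_succ]
      simp [Fin.cons_succ, Fin.cons_zero]
  rw [h1, Finset.Nat.sum_antidiagonal_eq_sum_range_succ_mk
    (fun mr => ∑ c ∈ Finset.Nat.antidiagonalTuple k mr.2,
      x 0 ^ mr.1 * ∏ i, (x ∘ Fin.succ) i ^ c i) n]
  refine Finset.sum_congr rfl fun i hi => ?_
  rw [W_eq_tuple, Finset.mul_sum]

lemma W_rec (k n : ℕ) (x : Fin (k + 1) → ℤ) :
    W (k + 1) (n + 1) x = x 0 * W (k + 1) n x + W k (n + 1) (x ∘ Fin.succ) := by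
  rw [W_closed k (n + 1) x, W_closed k n x]
  rw [Finset.sum_range_succ' (fun i => x 0 ^ i * W k (n + 1 - i) (x ∘ Fin.succ)) (n + 1)]
  have h : ∀ i ∈ Finset.range (n + 1),
      x 0 ^ (i + 1) * W k (n + 1 - (i + 1)) (x ∘ Fin.succ)
        = x 0 * (x 0 ^ i * W k (n - i) (x ∘ Fin.succ)) := by
    intro i hi
    have e : n + 1 - (i + 1) = n - i := by omega
    rw [e, pow_succ]; ring
  rw [Finset.sum_congr rfl h, ← Finset.mul_sum]
  simp only [pow_zero, one_mul, Nat.sub_zero]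

/-- spreading lemma for a log-concave-type family -/
lemma spreadL (a : ℕ → ℤ)
    (F : ∀ p q : ℕ, q ≤ p → a q * a (p + 1) ≤ a (q + 1) * a p) :
    ∀ s q d : ℕ, s ≤ d → a q * a (q + d + s) ≤ a (q + s) * a (q + d) := by
  intro s
  induction s with
  | zero =>
    intro q d _
    rw [Nat.add_zero, Nat.add_zero, mul_comm]
  | succ s ih =>
    intro q d hsd
    obtain ⟨e, rfl⟩ : ∃ e, d = e + 1 := ⟨d - 1, by omega⟩
    have h1 := F (q + (e + 1) + s) q (by omega)
    have h2 := ih (q + 1) e (by omega)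
    have e1 : q + (e + 1) + (s + 1) = q + (e + 1) + s + 1 := by ring
    have e2 : q + 1 + e + s = q + (e + 1) + s := by ring
    have e3 : q + 1 + s = q + (s + 1) := by ring
    have e4 : q + 1 + e = q + (e + 1) := by ring
    rw [e2, e3, e4] at h2
    rw [e1]
    exact h1.trans h2

lemma keyIneq (a : ℕ → ℤ)
    (F : ∀ p q : ℕ, q ≤ p → a q * a (p + 1) ≤ a (q + 1) * a p)
    {p q m : ℕ} (hm : m ≤ q) (hqp : q ≤ p) :
    a (q - m) * a (p + 1) ≤ a (q + 1) * a (p - m) := by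
  obtain ⟨b, rfl⟩ : ∃ b, q = b + m := ⟨q - m, by omega⟩
  obtain ⟨D, rfl⟩ : ∃ D, p = b + m + D := ⟨p - (b + m), by omega⟩
  have e2 : b + m - m = b := by omega
  have e3 : b + m + D - m = b + D := by omega
  rw [e2, e3]
  rcases le_total (m + 1) D with h | h
  · have H := spreadL a F (m + 1) b D h
    have e : b + D + (m + 1) = b + m + D + 1 := by ring
    have e4 : b + (m + 1) = b + m + 1 := by ring
    rw [e, e4] at H
    exact H
  · have H := spreadL a F D b (m + 1) h
    have e : b + (m + 1) + D = b + m + D + 1 := by ring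
    have e4 : b + (m + 1) = b + m + 1 := by ring
    rw [e, e4] at H
    calc a b * a (b + m + D + 1) ≤ a (b + D) * a (b + m + 1) := H
      _ = a (b + m + 1) * a (b + D) := mul_comm _ _

lemma W_family : ∀ (k : ℕ) (x : Fin k → ℤ), (∀ i, 0 ≤ x i) →
    ∀ p q : ℕ, q ≤ p → W k q x * W k (p + 1) x ≤ W k (q + 1) x * W k p x := by
  intro k
  induction k with
  | zero =>
    intro x hx p q hqp
    have h0 : W 0 (p + 1) x = 0 := by
      unfold W
      rw [Finset.sum_eq_zero]
      intro c hc
      simp only [Finset.mem_filter] at hc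
      exact absurd hc.2 (by simp)
    rw [h0, mul_zero]
    exact mul_nonneg (W_nonneg hx) (W_nonneg hx)
  | succ k ih =>
    intro x hx p q hqp
    set t := x 0 with ht_def
    have ht : 0 ≤ t := hx 0
    set a : ℕ → ℤ := fun r => W k r (x ∘ Fin.succ) with ha_def
    have ha : ∀ r, 0 ≤ a r := fun r => W_nonneg (fun i => hx _)
    have F : ∀ p q : ℕ, q ≤ p → a q * a (p + 1) ≤ a (q + 1) * a p :=
      fun p q h => ih (x ∘ Fin.succ) (fun i => hx _) p q h
    have cross : W (k + 1) q x * a (p + 1) ≤ a (q + 1) * W (k + 1) p x := by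
      rw [W_closed k q x, W_closed k p x, Finset.sum_mul, Finset.mul_sum]
      calc ∑ i ∈ Finset.range (q + 1), t ^ i * a (q - i) * a (p + 1)
          ≤ ∑ i ∈ Finset.range (q + 1), t ^ i * (a (q + 1) * a (p - i)) := by
            refine Finset.sum_le_sum fun i hi => ?_
            have hi' : i ≤ q := by simpa [Nat.lt_succ_iff] using hi
            rw [mul_assoc]
            exact mul_le_mul_of_nonneg_left (keyIneq a F hi' hqp) (pow_nonneg ht i)
        _ ≤ ∑ i ∈ Finset.range (p + 1), t ^ i * (a (q + 1) * a (p - i)) := by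
            refine Finset.sum_le_sum_of_subset_of_nonneg
              (Finset.range_subset_range.2 (by omega)) fun i _ _ => ?_
            exact mul_nonneg (pow_nonneg ht i) (mul_nonneg (ha _) (ha _))
        _ = ∑ i ∈ Finset.range (p + 1), a (q + 1) * (t ^ i * a (p - i)) := by
            refine Finset.sum_congr rfl fun i _ => by ring
    rw [W_rec k p x, W_rec k q x]
    have hcq : 0 ≤ W (k + 1) q x := W_nonneg hx
    have hcp : 0 ≤ W (k + 1) p x := W_nonneg hx
    nlinarith [cross, mul_nonneg ht (mul_nonneg hcq hcp)]

theorem stmt1 (k : ℕ) (x : Fin k → ℤ) (hx : ∀ i, 0 ≤ x i) (j : ℕ) (hj : 1 ≤ j) :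
    (W k j x) ^ 2 ≥ W k (j - 1) x * W k (j + 1) x := by
  obtain ⟨q, rfl⟩ : ∃ q, j = q + 1 := ⟨j - 1, by omega⟩
  have h := W_family k x hx (q + 1) q (Nat.le_succ q)
  simpa [sq, Nat.add_sub_cancel] using h
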